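/- arXiv:2502.14690 — 2 statements merged into one kernel-verified Lean document; each statement's English description precedes it below -/
import Mathlib

section
/- Consider the RRC market with students {s1,s2,s3}, colleges {c1,c2,c3}, one non-empty resource r with region C_r = {c1,c2,c3}, quotas q_{c1} = q_{c2} = q_{c3} = q_r = 1, student preferences s1: (c1,r) ≻ (c1,r0) ≻ (c3,r) ≻ (c2,r) ≻ (c3,r0) ≻ (c2,r0) ≻ ∅, s2: (c3,r) ≻ (c2,r) ≻ (c1,r) ≻ (c2,r0) ≻ (c3,r0) ≻ (c1,r0) ≻ ∅, s3: (c1,r) ≻ (c3,r) ≻ (c1,r0) ≻ (c2,r) ≻ ∅ (all other pairs unacceptable), and college priorities c1: s2 ≻ s3 ≻ s1, c2: s2 ≻ s3 ≻ s1, c3: s3 ≻ s2 ≻ s1. Then this market has exactly two direct-envy stable matchings, μ1 = {(s1,c3,r0),(s2,c2,r),(s3,c1,r0)} and μ2 = {(s1,c1,r0),(s2,c2,r0),(s3,c3,r)}, and neither μ1 nor μ2 is envy-free; consequently, no matching in this market is both direct-envy stable and envy-free. -/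
namespace RRC

section Defs

variable (S C R : Type)

/-- A matching market with resource-regional caps (RRC).  Students `S`, colleges `C`,
non-empty resources `R`; the empty resource `r0` is represented by `none : Option R`. -/
structure Market where
  /-- quota of each college -/
  qC : C → ℕ
  qC_pos : ∀ c, 0 < qC c
  /-- quota of each non-empty resource -/
  qR : R → ℕ
  qR_pos : ∀ r, 0 < qR r
  /-- region of each non-empty resource (the region of `r0` is all of `C`) -/
  region : R → Finset C
  region_nonempty : ∀ r, (region r).Nonempty
  /-- strict priority order of each college over students -/
  prC : C → S → S → Prop
  prC_sto : ∀ c, IsStrictTotalOrder S (prC c)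
  /-- strict preference order of each student over `(C × R0) ∪ {∅}`;
  `none` is the outside option `∅` -/
  prS : S → Option (C × Option R) → Option (C × Option R) → Prop
  prS_sto : ∀ s, IsStrictTotalOrder (Option (C × Option R)) (prS s)

/-- A matching: each student appears in at most one contract, so a matching is a
function from students to optional (college, resource) pairs. -/
abbrev Matching := S → Option (C × Option R)

variable {S C R} [DecidableEq S]

/-- Number of contracts of the college `c` in `μ`. -/
noncomputable def collegeCount (μ : Matching S C R) (c : C) : ℕ :=
  {s : S | ∃ r, μ s = some (c, r)}.ncard

/-- Number of contracts containing the non-empty resource `r` in `μ`. -/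
noncomputable def resourceCount (μ : Matching S C R) (r : R) : ℕ :=
  {s : S | ∃ c, μ s = some (c, some r)}.ncard

/-- Feasibility: college quotas, resource quotas, and regions are respected. -/
def Feasible (M : Market S C R) (μ : Matching S C R) : Prop :=
  (∀ c, collegeCount μ c ≤ M.qC c) ∧
  (∀ r, resourceCount μ r ≤ M.qR r) ∧
  (∀ s c r, μ s = some (c, some r) → c ∈ M.region r)

/-- A pair `(c, r)` is acceptable for `s` if `s` prefers it to being unmatched. -/
def Acceptable (M : Market S C R) (s : S) (c : C) (r : Option R) : Prop :=
  M.prS s (some (c, r)) none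

/-- Individual rationality: no unacceptable contract is used. -/
def IndRational (M : Market S C R) (μ : Matching S C R) : Prop :=
  ∀ s x, μ s = some x → M.prS s (some x) none

/-- The contract `(s, c, r) ∉ μ` envy-blocks `μ` through `(s', c, r') ∈ μ`. -/
def EnvyBlocksThrough (M : Market S C R) (μ : Matching S C R)
    (s : S) (c : C) (r : Option R) (s' : S) (r' : Option R) : Prop :=
  μ s ≠ some (c, r) ∧ μ s' = some (c, r') ∧
  M.prS s (some (c, r)) (μ s) ∧ M.prC c s s' ∧
  Feasible M (Function.update (Function.update μ s' none) s (some (c, r)))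

def EnvyBlocks (M : Market S C R) (μ : Matching S C R)
    (s : S) (c : C) (r : Option R) : Prop :=
  ∃ s' r', EnvyBlocksThrough M μ s c r s' r'

def EnvyFree (M : Market S C R) (μ : Matching S C R) : Prop :=
  ∀ s c r, ¬ EnvyBlocks M μ s c r

/-- The contract `(s, c, r) ∉ μ` waste-blocks `μ`. -/
def WasteBlocks (M : Market S C R) (μ : Matching S C R)
    (s : S) (c : C) (r : Option R) : Prop :=
  μ s ≠ some (c, r) ∧ M.prS s (some (c, r)) (μ s) ∧
  Feasible M (Function.update μ s (some (c, r)))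

def NonWasteful (M : Market S C R) (μ : Matching S C R) : Prop :=
  ∀ s c r, ¬ WasteBlocks M μ s c r

/-- Stability: feasible, individually rational, no envy-blocking and no
waste-blocking contract. -/
def Stable (M : Market S C R) (μ : Matching S C R) : Prop :=
  Feasible M μ ∧ IndRational M μ ∧ EnvyFree M μ ∧ NonWasteful M μ

/-- `(s, c, r)` direct-envy-blocks `μ`: it envy-blocks through some `(s', c, r')`
with `r ∈ {r', r0}`. -/
def DirectEnvyBlocks (M : Market S C R) (μ : Matching S C R)
    (s : S) (c : C) (r : Option R) : Prop :=
  ∃ s' r', EnvyBlocksThrough M μ s c r s' r' ∧ (r = r' ∨ r = none)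

/-- The waste-blocking contract `(s, c, r)` is dominated by `(s', c, r') ∉ μ`. -/
def Dominates (M : Market S C R) (μ : Matching S C R)
    (s : S) (c : C) (r : Option R) (s' : S) (r' : Option R) : Prop :=
  μ s' ≠ some (c, r') ∧
  ¬ WasteBlocks M μ s' c r' ∧ ¬ DirectEnvyBlocks M μ s' c r' ∧
  DirectEnvyBlocks M (Function.update μ s (some (c, r))) s' c r'

/-- Direct-envy stability: feasible, individually rational, no direct-envy-blocking
contract, and every waste-blocking contract is dominated. -/
def DirectEnvyStable (M : Market S C R) (μ : Matching S C R) : Prop :=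
  Feasible M μ ∧ IndRational M μ ∧
  (∀ s c r, ¬ DirectEnvyBlocks M μ s c r) ∧
  (∀ s c r, WasteBlocks M μ s c r → ∃ s' r', Dominates M μ s c r s' r')

/-- Weak stability: no direct-envy-blocking contract, and every waste-blocking
contract involves a non-empty resource whose quota is fully used. -/
def WeaklyStable (M : Market S C R) (μ : Matching S C R) : Prop :=
  Feasible M μ ∧ IndRational M μ ∧
  (∀ s c r, ¬ DirectEnvyBlocks M μ s c r) ∧
  (∀ s c (r : Option R), WasteBlocks M μ s c r →
    ∃ r₁, r = some r₁ ∧ resourceCount μ r₁ = M.qR r₁)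

/-- A waste-blocking contract is resource-blocking if the student is already
admitted to the same college. -/
def ResourceBlocks (M : Market S C R) (μ : Matching S C R)
    (s : S) (c : C) (r : Option R) : Prop :=
  WasteBlocks M μ s c r ∧ ∃ r', μ s = some (c, r')

/-- A waste-blocking contract is seat-blocking if the student is not admitted to
the same college. -/
def SeatBlocks (M : Market S C R) (μ : Matching S C R)
    (s : S) (c : C) (r : Option R) : Prop :=
  WasteBlocks M μ s c r ∧ ¬ ∃ r', μ s = some (c, r')

def ResourceEfficient (M : Market S C R) (μ : Matching S C R) : Prop :=
  ∀ s c r, ¬ ResourceBlocks M μ s c r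

def SeatEfficient (M : Market S C R) (μ : Matching S C R) : Prop :=
  ∀ s c r, ¬ SeatBlocks M μ s c r

end Defs

section Cutoffs

variable {S C R : Type} [Fintype S]

/-- A cutoff profile: one cutoff per (college, resource) pair, bounded by the
number of students, with the cutoff for the empty resource the largest. -/
def IsCutoffProfile (St : Type) [Fintype St] {Co Re : Type}
    (K : Co → Option Re → ℕ) : Prop :=
  (∀ c r, K c r ≤ Fintype.card St) ∧ ∀ c (r : Re), K c (some r) ≤ K c none

/-- Rank of student `s` in the priority order of college `c` (0 = best). -/
noncomputable def studentRank (M : Market S C R) (c : C) (s : S) : ℕ :=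
  {s' : S | M.prC c s' s}.ncard

/-- `(s, c, r)` is permitted by the cutoff profile `K` if `s` is among the top
`K c r` students of `c`'s priority order. -/
noncomputable def Permitted (M : Market S C R) (K : C → Option R → ℕ)
    (s : S) (c : C) (r : Option R) : Prop :=
  studentRank M c s < K c r

/-- `μ` is the matching induced by the cutoff profile `K`: every student gets
their most preferred acceptable permitted contract, if any. -/
def IsInduced (M : Market S C R) (K : C → Option R → ℕ) (μ : Matching S C R) : Prop :=
  ∀ s : S,
    (∀ c r, μ s = some (c, r) →
      Permitted M K s c r ∧ Acceptable M s c r ∧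
      ∀ c' r', Permitted M K s c' r' → Acceptable M s c' r' →
        (c', r') ≠ (c, r) → M.prS s (some (c, r)) (some (c', r'))) ∧
    (μ s = none → ∀ c r, ¬ (Permitted M K s c r ∧ Acceptable M s c r))

/-- `K + 1_r^c`: increase the cutoff of `(c, r)` by one (simultaneously increasing
the cutoff of `(c, r0)` if it was equal to that of `(c, r)`). -/
def bump [DecidableEq C] [DecidableEq R] (K : C → Option R → ℕ)
    (c : C) (r : Option R) : C → Option R → ℕ :=
  fun c' r' =>
    if c' = c ∧ (r' = r ∨ (r' = none ∧ r ≠ none ∧ K c none = K c r)) then K c' r' + 1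
    else K c' r'

/-- An optimal cutoff profile: the induced matching is feasible, and increasing any
non-maximal cutoff yields an infeasible induced matching. -/
def OptimalCutoffs [DecidableEq C] [DecidableEq R]
    (M : Market S C R) (K : C → Option R → ℕ) : Prop :=
  IsCutoffProfile S K ∧
  (∀ μ, IsInduced M K μ → Feasible M μ) ∧
  ∀ c r, K c r < Fintype.card S →
    ∀ μ', IsInduced M (bump K c r) μ' → ¬ Feasible M μ'

end Cutoffs

section SD

variable {S C R : Type} [DecidableEq S]

/-- `x` is the most preferred contract of the (unmatched) student `s` given the
current matching `μ`: the best acceptable contract keeping the matching feasible,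
or `none` if there is no such contract. -/
def BestChoice (M : Market S C R) (μ : Matching S C R) (s : S)
    (x : Option (C × Option R)) : Prop :=
  match x with
  | some (c, r) =>
      Acceptable M s c r ∧ Feasible M (Function.update μ s (some (c, r))) ∧
      ∀ c' r', Acceptable M s c' r' → Feasible M (Function.update μ s (some (c', r'))) →
        (c', r') = (c, r) ∨ M.prS s (some (c, r)) (some (c', r'))
  | none => ∀ c r, ¬ (Acceptable M s c r ∧ Feasible M (Function.update μ s (some (c, r))))

/-- A run of the serial dictatorship mechanism on a list of students:
`SDRun M l μ μ'` holds if starting from `μ` and processing the students of `l`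
in order, each one receiving their most preferred feasible acceptable contract,
yields `μ'`. -/
inductive SDRun (M : Market S C R) : List S → Matching S C R → Matching S C R → Prop
  | nil (μ : Matching S C R) : SDRun M [] μ μ
  | cons (s : S) (l : List S) (μ : Matching S C R) (x : Option (C × Option R))
      (μ' : Matching S C R) (hx : BestChoice M μ s x)
      (h : SDRun M l (Function.update μ s x) μ') : SDRun M (s :: l) μ μ'

/-- Student `s` weakly prefers `x` to `y`. -/
def WeaklyPrefers (M : Market S C R) (s : S) (x y : Option (C × Option R)) : Prop :=
  x = y ∨ M.prS s x y

/-- Pareto efficiency for students. -/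
def ParetoEfficient (M : Market S C R) (μ : Matching S C R) : Prop :=
  ¬ ∃ μ' : Matching S C R, Feasible M μ' ∧
    (∀ s, WeaklyPrefers M s (μ' s) (μ s)) ∧ ∃ s, M.prS s (μ' s) (μ s)

end SD

/-- A strict total order induced by an injective rank function (rank 0 = best). -/
lemma isStrictTotalOrder_of_rank {α : Type*} (f : α → ℕ) (hf : Function.Injective f) :
    IsStrictTotalOrder α (fun x y => f x < f y) where
  trichotomous a b := by
    intro h1 h2
    exact hf (Nat.le_antisymm (Nat.not_lt.mp h2) (Nat.not_lt.mp h1))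
  irrefl a := lt_irrefl (f a)
  trans a b c h1 h2 := lt_trans h1 h2

end RRC

namespace RRC

namespace Example4

/-! The market of Proposition 3 (impossibility of envy-freeness): students
`s1 = 0`, `s2 = 1`, `s3 = 2`; colleges `c1 = 0`, `c2 = 1`, `c3 = 2`; one non-empty
resource `r = some ()` whose region contains all three colleges; all quotas one.
Preferences (best first):
* `s1 : (c1,r), (c1,r0), (c3,r), (c2,r), (c3,r0), (c2,r0), ∅`;
* `s2 : (c3,r), (c2,r), (c1,r), (c2,r0), (c3,r0), (c1,r0), ∅`;
* `s3 : (c1,r), (c3,r), (c1,r0), (c2,r), ∅`;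
* `c1 : s2, s3, s1`;  `c2 : s2, s3, s1`;  `c3 : s3, s2, s1`. -/

/-- Rank of each pair/outside option for each student (0 = best; values above the
rank of `∅` correspond to unacceptable pairs). -/
def rkS : Fin 3 → Option (Fin 3 × Option Unit) → ℕ := fun s x =>
  if s = 0 then
    if x = some (0, some ()) then 0
    else if x = some (0, none) then 1
    else if x = some (2, some ()) then 2
    else if x = some (1, some ()) then 3
    else if x = some (2, none) then 4
    else if x = some (1, none) then 5
    else 6
  else if s = 1 then
    if x = some (2, some ()) then 0
    else if x = some (1, some ()) then 1
    else if x = some (0, some ()) then 2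
    else if x = some (1, none) then 3
    else if x = some (2, none) then 4
    else if x = some (0, none) then 5
    else 6
  else
    if x = some (0, some ()) then 0
    else if x = some (2, some ()) then 1
    else if x = some (0, none) then 2
    else if x = some (1, some ()) then 3
    else if x = none then 4
    else if x = some (1, none) then 5
    else 6

/-- Rank of each student for each college (0 = best). -/
def rkC : Fin 3 → Fin 3 → ℕ := fun c s =>
  if c = 2 then 2 - (s : ℕ)                        -- c3 : s3 ≻ s2 ≻ s1
  else if s = 1 then 0 else if s = 2 then 1 else 2 -- c1, c2 : s2 ≻ s3 ≻ s1

lemma rkS_inj : ∀ s, Function.Injective (rkS s) := by decide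
lemma rkC_inj : ∀ c, Function.Injective (rkC c) := by decide

/-- The RRC market of Proposition 3. -/
def mkt : Market (Fin 3) (Fin 3) Unit where
  qC := fun _ => 1
  qC_pos := fun _ => Nat.one_pos
  qR := fun _ => 1
  qR_pos := fun _ => Nat.one_pos
  region := fun _ => Finset.univ
  region_nonempty := fun _ => Finset.univ_nonempty
  prC := fun c s s' => rkC c s < rkC c s'
  prC_sto := fun c => isStrictTotalOrder_of_rank (rkC c) (rkC_inj c)
  prS := fun s x y => rkS s x < rkS s y
  prS_sto := fun s => isStrictTotalOrder_of_rank (rkS s) (rkS_inj s)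

/-- The matching `μ1 = {(s1,c3,r0), (s2,c2,r), (s3,c1,r0)}`. -/
def μ1 : Matching (Fin 3) (Fin 3) Unit := fun s =>
  if s = 0 then some (2, none)
  else if s = 1 then some (1, some ())
  else some (0, none)

/-- The matching `μ2 = {(s1,c1,r0), (s2,c2,r0), (s3,c3,r)}`. -/
def μ2 : Matching (Fin 3) (Fin 3) Unit := fun s =>
  if s = 0 then some (0, none)
  else if s = 1 then some (1, none)
  else some (2, some ())

lemma collegeCount_eq (μ : Matching (Fin 3) (Fin 3) Unit) (c : Fin 3) :
    collegeCount μ c = (Finset.univ.filter fun s => ∃ r, μ s = some (c, r)).card := by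
  classical
  rw [collegeCount, ← Set.ncard_coe_finset]
  congr 1
  ext s; simp

lemma resourceCount_eq (μ : Matching (Fin 3) (Fin 3) Unit) (r : Unit) :
    resourceCount μ r = (Finset.univ.filter fun s => ∃ c, μ s = some (c, some r)).card := by
  classical
  rw [resourceCount, ← Set.ncard_coe_finset]
  congr 1
  ext s; simp

instance decFeas (μ : Matching (Fin 3) (Fin 3) Unit) : Decidable (Feasible mkt μ) :=
  decidable_of_iff
    ((∀ c, (Finset.univ.filter fun s => ∃ r, μ s = some (c, r)).card ≤ 1) ∧
     (∀ r : Unit, (Finset.univ.filter fun s => ∃ c, μ s = some (c, some r)).card ≤ 1) ∧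
     (∀ s c (r : Unit), μ s = some (c, some r) → c ∈ (Finset.univ : Finset (Fin 3))))
    (by simp [Feasible, collegeCount_eq, resourceCount_eq, mkt])

instance decPrS (s : Fin 3) (x y : Option (Fin 3 × Option Unit)) :
    Decidable (mkt.prS s x y) :=
  decidable_of_iff (rkS s x < rkS s y) Iff.rfl

instance decPrC (c : Fin 3) (s s' : Fin 3) : Decidable (mkt.prC c s s') :=
  decidable_of_iff (rkC c s < rkC c s') Iff.rfl

instance decEBT (μ : Matching (Fin 3) (Fin 3) Unit) (s c r s' r') :
    Decidable (EnvyBlocksThrough mkt μ s c r s' r') := by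
  unfold EnvyBlocksThrough; infer_instance

instance decEB (μ : Matching (Fin 3) (Fin 3) Unit) (s c r) :
    Decidable (EnvyBlocks mkt μ s c r) := by
  unfold EnvyBlocks; infer_instance

instance decEF (μ : Matching (Fin 3) (Fin 3) Unit) :
    Decidable (EnvyFree mkt μ) := by
  unfold EnvyFree; infer_instance

instance decDEB (μ : Matching (Fin 3) (Fin 3) Unit) (s c r) :
    Decidable (DirectEnvyBlocks mkt μ s c r) := by
  unfold DirectEnvyBlocks; infer_instance

instance decWB (μ : Matching (Fin 3) (Fin 3) Unit) (s c r) :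
    Decidable (WasteBlocks mkt μ s c r) := by
  unfold WasteBlocks; infer_instance

instance decDom (μ : Matching (Fin 3) (Fin 3) Unit) (s c r s' r') :
    Decidable (Dominates mkt μ s c r s' r') := by
  unfold Dominates; infer_instance

instance decIR (μ : Matching (Fin 3) (Fin 3) Unit) :
    Decidable (IndRational mkt μ) := by
  unfold IndRational; infer_instance

instance decDES (μ : Matching (Fin 3) (Fin 3) Unit) :
    Decidable (DirectEnvyStable mkt μ) := by
  unfold DirectEnvyStable; infer_instance

set_option maxRecDepth 100000 in
set_option maxHeartbeats 4000000 in
/-- `μ1` and `μ2` are exactly the direct-envy stable matchings of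
this market, neither of them is envy-free, and consequently no matching of this
market is both direct-envy stable and envy-free. -/
theorem two_directEnvyStable_none_envyFree :
    (∀ μ : Matching (Fin 3) (Fin 3) Unit,
      DirectEnvyStable mkt μ ↔ (μ = μ1 ∨ μ = μ2)) ∧
    ¬ EnvyFree mkt μ1 ∧ ¬ EnvyFree mkt μ2 ∧
    (∀ μ : Matching (Fin 3) (Fin 3) Unit,
      ¬ (DirectEnvyStable mkt μ ∧ EnvyFree mkt μ)) := by
  refine ⟨by decide, by decide, by decide, by decide⟩

end Example4

end RRC
end

section
/- In any RRC market, for every direct-envy stable matching μ there exists exactly one optimal cutoff profile K such that μ(K) = μ. -/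
namespace RRC
section Aux
set_option linter.unusedSectionVars false
variable {S C R : Type} [Fintype S] [DecidableEq S]

lemma prS_irrefl (M : Market S C R) (s : S) (x : Option (C × Option R)) : ¬ M.prS s x x :=
  (M.prS_sto s).irrefl x

lemma prS_trans (M : Market S C R) (s : S) {x y z : Option (C × Option R)}
    (h1 : M.prS s x y) (h2 : M.prS s y z) : M.prS s x z :=
  (M.prS_sto s).trans x y z h1 h2

lemma prS_asymm (M : Market S C R) (s : S) {x y : Option (C × Option R)}
    (h1 : M.prS s x y) (h2 : M.prS s y x) : False :=
  prS_irrefl M s x (prS_trans M s h1 h2)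

lemma prS_tri (M : Market S C R) (s : S) (x y : Option (C × Option R)) :
    M.prS s x y ∨ x = y ∨ M.prS s y x :=
  by have h := (M.prS_sto s).trichotomous x y; tauto

lemma prS_ne (M : Market S C R) {s : S} {x y : Option (C × Option R)}
    (h : M.prS s x y) : x ≠ y := fun he => prS_irrefl M s y (he ▸ h)

lemma prC_irrefl (M : Market S C R) (c : C) (s : S) : ¬ M.prC c s s :=
  (M.prC_sto c).irrefl s

lemma prC_trans (M : Market S C R) (c : C) {x y z : S}
    (h1 : M.prC c x y) (h2 : M.prC c y z) : M.prC c x z :=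
  (M.prC_sto c).trans x y z h1 h2

lemma prC_tri (M : Market S C R) (c : C) (x y : S) :
    M.prC c x y ∨ x = y ∨ M.prC c y x :=
  by have h := (M.prC_sto c).trichotomous x y; tauto

lemma rank_lt_of_pr (M : Market S C R) {c : C} {a b : S} (h : M.prC c a b) :
    studentRank M c a < studentRank M c b := by
  apply Set.ncard_lt_ncard _ (Set.toFinite _)
  exact (Set.ssubset_iff_of_subset (fun x hx => prC_trans M c hx h)).mpr
    ⟨a, h, prC_irrefl M c a⟩

lemma pr_iff_rank_lt (M : Market S C R) {c : C} {a b : S} :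
    M.prC c a b ↔ studentRank M c a < studentRank M c b := by
  refine ⟨rank_lt_of_pr M, fun hlt => ?_⟩
  rcases prC_tri M c a b with h | h | h
  · exact h
  · subst h; exact absurd hlt (lt_irrefl _)
  · exact absurd (lt_trans hlt (rank_lt_of_pr M h)) (lt_irrefl _)

lemma rank_lt_card (M : Market S C R) (c : C) (s : S) :
    studentRank M c s < Fintype.card S := by
  rw [← Nat.card_eq_fintype_card, ← Set.ncard_univ S]
  exact Set.ncard_lt_ncard ((Set.ssubset_iff_of_subset (Set.subset_univ _)).mpr
    ⟨s, Set.mem_univ s, prC_irrefl M c s⟩) (Set.toFinite _)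

lemma rank_injective (M : Market S C R) (c : C) {a b : S}
    (h : studentRank M c a = studentRank M c b) : a = b := by
  rcases prC_tri M c a b with h' | h' | h'
  · exact absurd (rank_lt_of_pr M h') (by omega)
  · exact h'
  · exact absurd (rank_lt_of_pr M h') (by omega)

lemma exists_rank (M : Market S C R) (c : C) {t : ℕ} (ht : t < Fintype.card S) :
    ∃ s : S, studentRank M c s = t := by
  have hbij : Function.Bijective (fun s : S => (⟨studentRank M c s, rank_lt_card M c s⟩ :
      Fin (Fintype.card S))) := by
    rw [Fintype.bijective_iff_injective_and_card]
    exact ⟨fun a b hab => rank_injective M c (by simpa using hab), by simp⟩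
  obtain ⟨s, hs⟩ := hbij.surjective ⟨t, ht⟩
  exact ⟨s, by simpa using congrArg Fin.val hs⟩

end Aux
section Aux2
set_option linter.unusedSectionVars false
variable {S C R : Type} [Fintype S] [DecidableEq S]

lemma ncard_le_of_subset {A B : Set S} (h : B ⊆ A) : B.ncard ≤ A.ncard :=
  Set.ncard_le_ncard h (Set.toFinite _)

lemma ncard_le_swap {A B : Set S} {x y : S} (hx : x ∈ A) (h : B ⊆ (A \ {x}) ∪ {y}) :
    B.ncard ≤ A.ncard := by
  calc B.ncard ≤ ((A \ {x}) ∪ {y}).ncard := ncard_le_of_subset h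
    _ ≤ (A \ {x}).ncard + ({y} : Set S).ncard := Set.ncard_union_le _ _
    _ = (A.ncard - 1) + 1 := by
        rw [Set.ncard_diff_singleton_of_mem hx, Set.ncard_singleton]
    _ = A.ncard := Nat.succ_pred_eq_of_pos ((Set.ncard_pos (Set.toFinite _)).mpr ⟨x, hx⟩)

/-- The swap: remove `s₃`'s contract `(c, r₃)`, give `s` the contract `(c, r'')` with
`r'' = r₃` or `r'' = none`.  This is always feasible. -/
lemma swap_feasible (M : Market S C R) {μ : Matching S C R} (hf : Feasible M μ)
    {s₃ s : S} {c : C} {r₃ r'' : Option R} (h₃ : μ s₃ = some (c, r₃))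
    (hr : r'' = r₃ ∨ r'' = none) :
    Feasible M (Function.update (Function.update μ s₃ none) s (some (c, r''))) := by
  obtain ⟨h1, h2, h3⟩ := hf
  set ξ := Function.update (Function.update μ s₃ none) s (some (c, r'')) with hξdef
  have hξ : ∀ t, ξ t = if t = s then some (c, r'') else if t = s₃ then none else μ t := by
    intro t
    by_cases h : t = s
    · simp [hξdef, h]
    · by_cases h' : t = s₃ <;> simp [hξdef, h, h', Function.update_apply]
  refine ⟨fun c' => ?_, fun r₄ => ?_, fun t c₄ r₄ hmem => ?_⟩
  · -- college counts
    refine le_trans ?_ (h1 c')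
    by_cases hc : c' = c
    · subst hc
      apply ncard_le_swap (A := {t | ∃ ρ, μ t = some (c', ρ)}) (x := s₃) (y := s) ⟨r₃, h₃⟩
      rintro t ⟨ρ, ht⟩
      rw [hξ] at ht
      by_cases h : t = s
      · exact Or.inr (by simp [h])
      · rw [if_neg h] at ht
        by_cases h' : t = s₃
        · rw [if_pos h'] at ht; exact absurd ht (by simp)
        · rw [if_neg h'] at ht; exact Or.inl ⟨⟨ρ, ht⟩, h'⟩
    · apply ncard_le_of_subset
      rintro t ⟨ρ, ht⟩
      rw [hξ] at ht
      by_cases h : t = s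
      · rw [if_pos h] at ht
        exact absurd (congrArg (Option.map Prod.fst) ht) (by simp [Ne.symm hc])
      · rw [if_neg h] at ht
        by_cases h' : t = s₃
        · rw [if_pos h'] at ht; exact absurd ht (by simp)
        · rw [if_neg h'] at ht; exact ⟨ρ, ht⟩
  · -- resource counts
    refine le_trans ?_ (h2 r₄)
    by_cases hcase : r'' = some r₄
    · have hr₃ : r₃ = some r₄ := by
        rcases hr with h | h
        · rw [← h, hcase]
        · rw [h] at hcase; exact absurd hcase (by simp)
      apply ncard_le_swap (A := {t | ∃ c₅, μ t = some (c₅, some r₄)}) (x := s₃) (y := s)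
        ⟨c, by rw [h₃, hr₃]⟩
      rintro t ⟨c₅, ht⟩
      rw [hξ] at ht
      by_cases h : t = s
      · exact Or.inr (by simp [h])
      · rw [if_neg h] at ht
        by_cases h' : t = s₃
        · rw [if_pos h'] at ht; exact absurd ht (by simp)
        · rw [if_neg h'] at ht; exact Or.inl ⟨⟨c₅, ht⟩, h'⟩
    · apply ncard_le_of_subset
      rintro t ⟨c₅, ht⟩
      rw [hξ] at ht
      by_cases h : t = s
      · rw [if_pos h] at ht
        have : r'' = some r₄ := (Prod.mk.injEq _ _ _ _ |>.mp (Option.some.inj ht)).2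
        exact absurd this hcase
      · rw [if_neg h] at ht
        by_cases h' : t = s₃
        · rw [if_pos h'] at ht; exact absurd ht (by simp)
        · rw [if_neg h'] at ht; exact ⟨c₅, ht⟩
  · -- regions
    rw [hξ] at hmem
    by_cases h : t = s
    · rw [if_pos h] at hmem
      obtain ⟨hc₄, hr₄⟩ := Prod.mk.injEq _ _ _ _ |>.mp (Option.some.inj hmem)
      have hr₃ : r₃ = some r₄ := by
        rcases hr with h' | h'
        · rw [← h', hr₄]
        · rw [h'] at hr₄; exact absurd hr₄ (by simp)
      exact hc₄ ▸ h3 s₃ c r₄ (by rw [h₃, hr₃])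
    · rw [if_neg h] at hmem
      by_cases h' : t = s₃
      · rw [if_pos h'] at hmem; exact absurd hmem (by simp)
      · rw [if_neg h'] at hmem; exact h3 t c₄ r₄ hmem

end Aux2
section Aux3
set_option linter.unusedSectionVars false
variable {S C R : Type} [Fintype S] [DecidableEq S]

lemma collegeSet_update (μ : Matching S C R) (a : S) (c : C) (x : Option R) :
    {t | ∃ ρ, Function.update μ a (some (c, x)) t = some (c, ρ)} =
      insert a ({t | ∃ ρ, μ t = some (c, ρ)} \ {a}) := by
  ext t
  by_cases h : t = a
  · subst h; simp
  · simp [Function.update_apply, h]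

lemma collegeCount_update_other (μ : Matching S C R) (a : S) (c c' : C) (x : Option R)
    (hc : c' ≠ c) :
    collegeCount (Function.update μ a (some (c, x))) c' ≤ collegeCount μ c' := by
  apply ncard_le_of_subset
  rintro t ⟨ρ, ht⟩
  rcases eq_or_ne t a with h | h
  · subst h
    rw [Function.update_self] at ht
    exact absurd (congrArg (Option.map Prod.fst) ht) (by simp [hc.symm])
  · rw [Function.update_of_ne h] at ht; exact ⟨ρ, ht⟩

lemma collegeCount_update_mem (μ : Matching S C R) {a : S} {c : C} (x : Option R)
    (hmem : ∃ ρ, μ a = some (c, ρ)) :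
    collegeCount (Function.update μ a (some (c, x))) c = collegeCount μ c := by
  unfold collegeCount
  rw [collegeSet_update, Set.insert_diff_singleton]
  exact congrArg Set.ncard (Set.insert_eq_self.mpr hmem)

lemma collegeCount_update_not_mem (μ : Matching S C R) {a : S} {c : C} (x : Option R)
    (hmem : ¬ ∃ ρ, μ a = some (c, ρ)) :
    collegeCount (Function.update μ a (some (c, x))) c = collegeCount μ c + 1 := by
  unfold collegeCount
  have hmem' : a ∉ {t | ∃ ρ, μ t = some (c, ρ)} := hmem
  rw [collegeSet_update, Set.insert_diff_singleton,
    Set.ncard_insert_of_notMem hmem' (Set.toFinite _)]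

lemma resourceCount_update_none (μ : Matching S C R) (a : S) (c : C) (r : R) :
    resourceCount (Function.update μ a (some (c, none))) r ≤ resourceCount μ r := by
  apply ncard_le_of_subset
  rintro t ⟨c₅, ht⟩
  rcases eq_or_ne t a with h | h
  · subst h; rw [Function.update_self] at ht; exact absurd ht (by simp)
  · rw [Function.update_of_ne h] at ht; exact ⟨c₅, ht⟩

lemma feasible_update_none_iff (M : Market S C R) {μ : Matching S C R} (hf : Feasible M μ)
    (a : S) (c : C) :
    Feasible M (Function.update μ a (some (c, none))) ↔
      (∃ ρ, μ a = some (c, ρ)) ∨ collegeCount μ c < M.qC c := by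
  constructor
  · intro hfe
    by_contra hcon
    push_neg at hcon
    obtain ⟨hnm, hge⟩ := hcon
    have := hfe.1 c
    rw [collegeCount_update_not_mem μ none (by push_neg; exact hnm)] at this
    omega
  · intro hcase
    refine ⟨fun c' => ?_, fun r₄ => le_trans (resourceCount_update_none μ a c r₄) (hf.2.1 r₄),
      fun t c₄ r₄ hmem => ?_⟩
    · rcases eq_or_ne c' c with hc | hc
      · subst hc
        rcases hcase with hmem | hlt
        · rw [collegeCount_update_mem μ none hmem]; exact hf.1 c'
        · by_cases hmem : ∃ ρ, μ a = some (c', ρ)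
          · rw [collegeCount_update_mem μ none hmem]; exact hf.1 c'
          · rw [collegeCount_update_not_mem μ none hmem]; omega
      · exact le_trans (collegeCount_update_other μ a c c' none hc) (hf.1 c')
    · rcases eq_or_ne t a with h | h
      · subst h; rw [Function.update_self] at hmem; exact absurd hmem (by simp)
      · rw [Function.update_of_ne h] at hmem; exact hf.2.2 t c₄ r₄ hmem

lemma mem_of_feasible_update_full (M : Market S C R) {μ : Matching S C R} {a : S} {c : C}
    {x : Option R} (hfe : Feasible M (Function.update μ a (some (c, x))))
    (hfull : collegeCount μ c = M.qC c) : ∃ ρ, μ a = some (c, ρ) := by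
  by_contra hnm
  have := hfe.1 c
  rw [collegeCount_update_not_mem μ x hnm] at this
  omega

/-- Construct a direct-envy-blocking contract from a demand relation, a lower-priority
matched student, and the resource condition; feasibility of the swap is automatic. -/
lemma deb_of (M : Market S C R) {μ : Matching S C R} (hf : Feasible M μ)
    {s s₃ : S} {c : C} {r₃ r'' : Option R} (h₃ : μ s₃ = some (c, r₃))
    (hd : M.prS s (some (c, r'')) (μ s)) (hpr : M.prC c s s₃)
    (hrr : r'' = r₃ ∨ r'' = none) : DirectEnvyBlocks M μ s c r'' :=
  ⟨s₃, r₃, ⟨fun he => prS_irrefl M s _ (he ▸ hd), h₃, hd, hpr,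
    swap_feasible M hf h₃ hrr⟩, hrr⟩

end Aux3
section Aux4
set_option linter.unusedSectionVars false
variable {S C R : Type} [Fintype S] [DecidableEq S]

/-- Key lemma: under direct-envy stability, a feasible improving update for `s₀`
(whose target, if a non-empty resource, is demanded by nobody of higher priority)
cannot exist. -/
lemma no_waste (M : Market S C R) {μ : Matching S C R} (h : DirectEnvyStable M μ)
    (s₀ : S) (c : C) (x : Option R)
    (hd : M.prS s₀ (some (c, x)) (μ s₀))
    (hfeas : Feasible M (Function.update μ s₀ (some (c, x))))
    (hx : ∀ s'', M.prS s'' (some (c, x)) (μ s'') → M.prC c s'' s₀ → x = none) :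
    False := by
  obtain ⟨hF, hIR, hnoDEB, hdom⟩ := h
  have hne : μ s₀ ≠ some (c, x) := fun he => prS_irrefl M s₀ _ (he ▸ hd)
  obtain ⟨s'', r'', hne'', hnWB, hnDEB, hDEBν⟩ := hdom s₀ c x ⟨hne, hd, hfeas⟩
  set ν := Function.update μ s₀ (some (c, x)) with hνdef
  obtain ⟨s₃, r₃, ⟨hne1, hν₃, hν_pref, hν_pr, hν_feas⟩, hrr⟩ := hDEBν
  have hs₃ne'' : s'' ≠ s₃ := fun he => prC_irrefl M c s₃ (he ▸ hν_pr)
  by_cases hs₃ : s₃ = s₀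
  · -- the envied contract under ν is the new contract of s₀
    subst hs₃
    have hr₃x : r₃ = x := by
      have := hν₃
      rw [hνdef, Function.update_self] at this
      exact ((Prod.mk.injEq _ _ _ _).mp (Option.some.inj this.symm)).2
    have hνs'' : ν s'' = μ s'' := Function.update_of_ne hs₃ne'' _ μ
    have hdem'' : M.prS s'' (some (c, r'')) (μ s'') := hνs'' ▸ hν_pref
    -- r'' must be none
    have hr''n : r'' = none := by
      rcases hrr with h' | h'
      · rw [h', hr₃x] at hdem'' ⊢
        exact hx s'' hdem'' hν_pr
      · exact h'
    subst hr''n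
    by_cases hWB : Feasible M (Function.update μ s'' (some (c, none)))
    · exact hnWB ⟨fun he => prS_irrefl M s'' _ (he ▸ hdem''), hdem'', hWB⟩
    · -- s'' is not at c, and c is full
      have hcon := (feasible_update_none_iff M hF s'' c).not.mp hWB
      push_neg at hcon
      obtain ⟨hnotat, hfull'⟩ := hcon
      have hfull : collegeCount μ c = M.qC c := le_antisymm (hF.1 c) hfull'
      obtain ⟨rold, hrold⟩ := mem_of_feasible_update_full M hfeas hfull
      exact hnoDEB s'' c none (deb_of M hF hrold hdem'' hν_pr (Or.inr rfl))
  · -- the envied contract already exists in μ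
    have hμ₃ : μ s₃ = some (c, r₃) := by
      rw [hνdef] at hν₃; rwa [Function.update_of_ne hs₃ _ μ] at hν₃
    by_cases hss : s'' = s₀
    · subst hss
      have : ν s'' = some (c, x) := Function.update_self _ _ _
      rw [this] at hν_pref
      exact hnoDEB s'' c r'' (deb_of M hF hμ₃ (prS_trans M s'' hν_pref hd) hν_pr hrr)
    · have hνs'' : ν s'' = μ s'' := Function.update_of_ne hss _ μ
      rw [hνs''] at hν_pref
      exact hnDEB (deb_of M hF hμ₃ hν_pref hν_pr hrr)

end Aux4
section Aux5
set_option linter.unusedSectionVars false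
variable {S C R : Type} [Fintype S] [DecidableEq S]

/-- The raw cutoff: minimum rank of a student demanding `(c, r)`, or `|S|` if none. -/
noncomputable def rawCut (M : Market S C R) (μ : Matching S C R) (c : C) (r : Option R) : ℕ :=
  sInf (insert (Fintype.card S) {n | ∃ s, studentRank M c s = n ∧ M.prS s (some (c, r)) (μ s)})

/-- The canonical cutoff profile associated with a matching. -/
noncomputable def theCut (M : Market S C R) (μ : Matching S C R) (c : C) :
    Option R → ℕ
  | none => rawCut M μ c none
  | some r => min (rawCut M μ c (some r)) (rawCut M μ c none)

lemma rawCut_le_card (M : Market S C R) (μ : Matching S C R) (c : C) (r : Option R) :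
    rawCut M μ c r ≤ Fintype.card S :=
  Nat.sInf_le (Set.mem_insert _ _)

lemma rawCut_le (M : Market S C R) (μ : Matching S C R) {c : C} {r : Option R} {s : S}
    (hd : M.prS s (some (c, r)) (μ s)) : rawCut M μ c r ≤ studentRank M c s :=
  Nat.sInf_le (Set.mem_insert_iff.mpr (Or.inr ⟨s, rfl, hd⟩))

lemma rawCut_mem (M : Market S C R) (μ : Matching S C R) (c : C) (r : Option R) :
    rawCut M μ c r = Fintype.card S ∨
      ∃ s, studentRank M c s = rawCut M μ c r ∧ M.prS s (some (c, r)) (μ s) := by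
  have := Nat.sInf_mem (s := insert (Fintype.card S)
    {n | ∃ s, studentRank M c s = n ∧ M.prS s (some (c, r)) (μ s)}) ⟨_, Set.mem_insert _ _⟩
  rcases this with h | h
  · exact Or.inl h
  · exact Or.inr h

lemma lt_rawCut (M : Market S C R) (μ : Matching S C R) {c : C} {r : Option R} {n : ℕ}
    (hcard : n < Fintype.card S)
    (hall : ∀ s, M.prS s (some (c, r)) (μ s) → n < studentRank M c s) :
    n < rawCut M μ c r := by
  rcases rawCut_mem M μ c r with h | ⟨s, hs, hd⟩
  · omega
  · rw [← hs]; exact hall s hd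

lemma theCut_le_raw (M : Market S C R) (μ : Matching S C R) (c : C) (r : Option R) :
    theCut M μ c r ≤ rawCut M μ c r := by
  cases r with
  | none => exact le_refl _
  | some r₁ => exact min_le_left _ _

lemma theCut_le_rawNone (M : Market S C R) (μ : Matching S C R) (c : C) (r : Option R) :
    theCut M μ c r ≤ rawCut M μ c none := by
  cases r with
  | none => exact le_refl _
  | some r₁ => exact min_le_right _ _

lemma theCut_le_card (M : Market S C R) (μ : Matching S C R) (c : C) (r : Option R) :
    theCut M μ c r ≤ Fintype.card S :=
  le_trans (theCut_le_raw M μ c r) (rawCut_le_card M μ c r)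

lemma theCut_some_le_none (M : Market S C R) (μ : Matching S C R) (c : C) (r : R) :
    theCut M μ c (some r) ≤ theCut M μ c none := min_le_right _ _

/-- If a cutoff of the canonical profile is non-maximal, there is a demander realizing it. -/
lemma theCut_witness (M : Market S C R) (μ : Matching S C R) (c : C) (r : Option R)
    (hlt : theCut M μ c r < Fintype.card S) :
    ∃ x s, (x = r ∨ (x = none ∧ theCut M μ c none = theCut M μ c r)) ∧
      studentRank M c s = theCut M μ c r ∧ M.prS s (some (c, x)) (μ s) := by
  cases r with
  | none =>
      rcases rawCut_mem M μ c none with h | ⟨s, hs, hd⟩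
      · exact absurd hlt (by simp [theCut, h])
      · exact ⟨none, s, Or.inl rfl, hs, hd⟩
  | some r₁ =>
      rcases le_total (rawCut M μ c (some r₁)) (rawCut M μ c none) with hle | hle
      · have hmin : theCut M μ c (some r₁) = rawCut M μ c (some r₁) := min_eq_left hle
        rcases rawCut_mem M μ c (some r₁) with h | ⟨s, hs, hd⟩
        · exact absurd hlt (by simp [hmin, h])
        · exact ⟨some r₁, s, Or.inl rfl, by rw [hmin]; exact hs, hd⟩
      · have hmin : theCut M μ c (some r₁) = rawCut M μ c none := min_eq_right hle
        rcases rawCut_mem M μ c none with h | ⟨s, hs, hd⟩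
        · exact absurd hlt (by simp [hmin, h])
        · exact ⟨none, s, Or.inr ⟨rfl, by simp only [theCut]; exact (min_eq_right hle).symm⟩, by rw [hmin]; exact hs, hd⟩

/-- Two induced matchings agree at any student whose permission sets agree. -/
lemma induced_agree (M : Market S C R) {K₁ K₂ : C → Option R → ℕ}
    {μ₁ μ₂ : Matching S C R} (h₁ : IsInduced M K₁ μ₁) (h₂ : IsInduced M K₂ μ₂) (s : S)
    (hp : ∀ c r, Permitted M K₁ s c r ↔ Permitted M K₂ s c r) : μ₁ s = μ₂ s := by
  cases hμ₁ : μ₁ s with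
  | none =>
      cases hμ₂ : μ₂ s with
      | none => rfl
      | some y =>
          obtain ⟨hperm, hacc, _⟩ := (h₂ s).1 y.1 y.2 (by rw [hμ₂])
          exact absurd ⟨(hp _ _).mpr hperm, hacc⟩ ((h₁ s).2 hμ₁ y.1 y.2)
  | some y =>
      obtain ⟨hperm₁, hacc₁, hbest₁⟩ := (h₁ s).1 y.1 y.2 (by rw [hμ₁])
      cases hμ₂ : μ₂ s with
      | none => exact absurd ⟨(hp _ _).mp hperm₁, hacc₁⟩ ((h₂ s).2 hμ₂ y.1 y.2)
      | some z =>
          obtain ⟨hperm₂, hacc₂, hbest₂⟩ := (h₂ s).1 z.1 z.2 (by rw [hμ₂])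
          rcases eq_or_ne y z with he | hne
          · rw [he]
          · have hb₁ := hbest₁ z.1 z.2 ((hp _ _).mpr hperm₂) hacc₂
              (by simpa [Prod.ext_iff] using (Ne.symm hne))
            have hb₂ := hbest₂ y.1 y.2 ((hp _ _).mp hperm₁) hacc₁
              (by simpa [Prod.ext_iff] using hne)
            exact absurd rfl (prS_ne M (prS_trans M s hb₁ hb₂))

end Aux5
section Aux6
set_option linter.unusedSectionVars false
variable {S C R : Type} [Fintype S] [DecidableEq S] [DecidableEq C] [DecidableEq R]

lemma permitted_bump_iff (M : Market S C R) (K : C → Option R → ℕ) (c : C) (r : Option R)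
    (s : S) (c₂ : C) (r₂ : Option R) :
    Permitted M (bump K c r) s c₂ r₂ ↔ Permitted M K s c₂ r₂ ∨
      (studentRank M c₂ s = K c r ∧ c₂ = c ∧
        (r₂ = r ∨ (r₂ = none ∧ r ≠ none ∧ K c none = K c r))) := by
  unfold Permitted bump
  by_cases hcond : c₂ = c ∧ (r₂ = r ∨ (r₂ = none ∧ r ≠ none ∧ K c none = K c r))
  · rw [if_pos hcond]
    have hval : K c₂ r₂ = K c r := by
      obtain ⟨hc, hd⟩ := hcond
      subst hc
      rcases hd with hd | ⟨hd, _, heq⟩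
      · rw [hd]
      · rw [hd]; exact heq
    rw [hval]
    constructor
    · intro hlt
      rcases Nat.lt_succ_iff_lt_or_eq.mp hlt with h | h
      · exact Or.inl (by omega)
      · exact Or.inr ⟨h, hcond⟩
    · rintro (hlt | ⟨heq, _⟩) <;> omega
  · rw [if_neg hcond]
    constructor
    · exact Or.inl
    · rintro (hlt | ⟨heq, hc, hd⟩)
      · exact hlt
      · exact absurd ⟨hc, hd⟩ hcond

lemma permitted_bump_mono (M : Market S C R) {K : C → Option R → ℕ} {c : C} {r : Option R}
    {s : S} {c₂ : C} {r₂ : Option R} (h : Permitted M K s c₂ r₂) :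
    Permitted M (bump K c r) s c₂ r₂ :=
  (permitted_bump_iff M K c r s c₂ r₂).mpr (Or.inl h)

/-- Structure of a matching induced by a bumped profile: only the student at the bumped
rank can change, and if so, only to a newly permitted contract she demands. -/
lemma bump_induced (M : Market S C R) {K : C → Option R → ℕ} {μ μ' : Matching S C R}
    {c : C} {r : Option R} {s₀ : S}
    (hK : IsInduced M K μ) (hK' : IsInduced M (bump K c r) μ')
    (hrank : studentRank M c s₀ = K c r) :
    (∀ s, s ≠ s₀ → μ' s = μ s) ∧
    (μ' s₀ = μ s₀ ∨ ∃ x, (x = r ∨ (x = none ∧ K c none = K c r)) ∧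
      μ' s₀ = some (c, x) ∧ M.prS s₀ (some (c, x)) (μ s₀)) := by
  constructor
  · intro s hs
    refine induced_agree M hK' hK s (fun c₂ r₂ => ?_)
    rw [permitted_bump_iff]
    constructor
    · rintro (hp | ⟨hr, hc, _⟩)
      · exact hp
      · subst hc
        exact absurd (rank_injective M c₂ (hr.trans hrank.symm)) hs
    · exact Or.inl
  · cases hμ' : μ' s₀ with
    | none =>
        left
        cases hμ : μ s₀ with
        | none => rfl
        | some y =>
            obtain ⟨hperm, hacc, _⟩ := (hK s₀).1 y.1 y.2 (by rw [hμ])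
            exact absurd ⟨permitted_bump_mono M hperm, hacc⟩ ((hK' s₀).2 hμ' y.1 y.2)
    | some y =>
        obtain ⟨hperm', hacc', hbest'⟩ := (hK' s₀).1 y.1 y.2 (by rw [hμ'])
        rcases (permitted_bump_iff M K c r s₀ y.1 y.2).mp hperm' with hpK | ⟨hrk, hc2, hd2⟩
        · -- the contract was already permitted: μ' s₀ = μ s₀
          left
          cases hμ : μ s₀ with
          | none => exact absurd ⟨hpK, hacc'⟩ ((hK s₀).2 hμ y.1 y.2)
          | some z =>
              obtain ⟨hpz, haz, hbz⟩ := (hK s₀).1 z.1 z.2 (by rw [hμ])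
              rcases eq_or_ne z y with he | hne
              · exact congrArg some he.symm
              · have hb₁ := hbz y.1 y.2 hpK hacc' (by simpa [Prod.ext_iff] using hne.symm)
                have hb₂ := hbest' z.1 z.2 (permitted_bump_mono M hpz) haz
                  (by simpa [Prod.ext_iff] using hne)
                exact absurd rfl (prS_ne M (prS_trans M s₀ hb₁ hb₂))
        · -- newly permitted contract
          right
          subst hc2
          have hKval : K y.1 y.2 = K y.1 r := by
            rcases hd2 with hd | ⟨hd, _, heq⟩
            · rw [hd]
            · rw [hd]; exact heq
          refine ⟨y.2, ?_, by simp, ?_⟩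
          · rcases hd2 with hd | ⟨hd, _, heq⟩
            · exact Or.inl hd
            · exact Or.inr ⟨hd, heq⟩
          · -- s₀ demands (y.1, y.2)
            cases hμ : μ s₀ with
            | none => exact hacc'
            | some z =>
                obtain ⟨hpz, haz, _⟩ := (hK s₀).1 z.1 z.2 (by rw [hμ])
                have hzy : z ≠ y := by
                  intro he
                  rw [he] at hpz
                  unfold Permitted at hpz
                  omega
                exact hbest' z.1 z.2 (permitted_bump_mono M hpz) haz
                  (by simpa [Prod.ext_iff] using hzy)

end Aux6
section Aux7
set_option linter.unusedSectionVars false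
variable {S C R : Type} [Fintype S] [DecidableEq S]

/-- Under direct-envy stability, every demander of `(c, x)` with `x` the resource of a
matched student (or `x = none`) has strictly larger rank than that matched student. -/
lemma rank_lt_of_matched_demander (M : Market S C R) {μ : Matching S C R}
    (h : DirectEnvyStable M μ) {s s' : S} {c : C} {r x : Option R}
    (hm : μ s = some (c, r)) (hd' : M.prS s' (some (c, x)) (μ s'))
    (hx : x = r ∨ x = none) :
    studentRank M c s < studentRank M c s' := by
  have hss' : s' ≠ s := by
    intro he
    subst he
    rcases hx with hxx | hxx
    · rw [hxx, hm] at hd'; exact prS_irrefl M s' _ hd'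
    · subst hxx
      refine no_waste M h s' c none hd' ?_ (fun _ _ _ => rfl)
      exact (feasible_update_none_iff M h.1 s' c).mpr (Or.inl ⟨r, hm⟩)
  have hnpr : ¬ M.prC c s' s := by
    intro hpr
    exact h.2.2.1 s' c x (deb_of M h.1 hm hd' hpr hx)
  rcases prC_tri M c s s' with h' | h' | h'
  · exact rank_lt_of_pr M h'
  · exact absurd h'.symm hss'
  · exact absurd h' hnpr

/-- The canonical cutoff profile induces the direct-envy stable matching. -/
lemma theCut_induced (M : Market S C R) {μ : Matching S C R} (h : DirectEnvyStable M μ) :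
    IsInduced M (theCut M μ) μ := by
  intro s
  constructor
  · rintro c r hm
    refine ⟨?_, h.2.1 s (c, r) hm, ?_⟩
    · -- the matched contract is permitted
      have hlow : ∀ x : Option R, (x = r ∨ x = none) →
          studentRank M c s < rawCut M μ c x := by
        intro x hx
        exact lt_rawCut M μ (rank_lt_card M c s)
          (fun s' hd' => rank_lt_of_matched_demander M h hm hd' hx)
      unfold Permitted
      cases r with
      | none => exact hlow none (Or.inl rfl)
      | some r₁ =>
          exact lt_min (hlow (some r₁) (Or.inl rfl)) (hlow none (Or.inr rfl))
    · -- it is the best permitted acceptable contract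
      intro c' r' hperm hacc hne
      rcases prS_tri M s (some (c, r)) (some (c', r')) with h' | h' | h'
      · exact h'
      · exact absurd (Option.some.inj h').symm hne
      · -- s demands (c', r'): contradiction with permission
        have hdem : M.prS s (some (c', r')) (μ s) := by rwa [hm]
        have : theCut M μ c' r' ≤ studentRank M c' s :=
          le_trans (theCut_le_raw M μ c' r') (rawCut_le M μ hdem)
        unfold Permitted at hperm
        omega
  · intro hm c' r' ⟨hperm, hacc⟩
    have hdem : M.prS s (some (c', r')) (μ s) := by rwa [hm]
    have : theCut M μ c' r' ≤ studentRank M c' s :=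
      le_trans (theCut_le_raw M μ c' r') (rawCut_le M μ hdem)
    unfold Permitted at hperm
    omega

end Aux7
/-- In any RRC market, every direct-envy stable matching is induced
by exactly one optimal cutoff profile. -/
theorem directEnvyStable_unique_optimal_cutoffs
    {S C R : Type} [Fintype S] [DecidableEq S] [Fintype C] [DecidableEq C]
    [Fintype R] [DecidableEq R]
    (M : Market S C R) (μ : Matching S C R) (h : DirectEnvyStable M μ) :
    ∃! K : C → Option R → ℕ, OptimalCutoffs M K ∧ IsInduced M K μ := by
  have hind : IsInduced M (theCut M μ) μ := theCut_induced M h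
  refine ⟨theCut M μ, ⟨⟨⟨fun c r => theCut_le_card M μ c r,
      fun c r => theCut_some_le_none M μ c r⟩, ?_, ?_⟩, hind⟩, ?_⟩
  · -- the induced matching is feasible
    intro μ₁ h₁
    have : μ₁ = μ := funext fun s => induced_agree M h₁ hind s (fun _ _ => Iff.rfl)
    rw [this]; exact h.1
  · -- bumping any non-maximal cutoff yields an infeasible matching
    intro c r hlt μ' hμ' hfeas'
    obtain ⟨x₀, s₀, hx₀, hrank₀, hd₀⟩ := theCut_witness M μ c r hlt
    obtain ⟨hoff, hcase⟩ := bump_induced M hind hμ' hrank₀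
    have hpermx : Permitted M (bump (theCut M μ) c r) s₀ c x₀ := by
      rw [permitted_bump_iff]
      right
      refine ⟨hrank₀, rfl, ?_⟩
      rcases hx₀ with h' | ⟨h', heq⟩
      · exact Or.inl h'
      · by_cases hrn : r = none
        · exact Or.inl (h'.trans hrn.symm)
        · exact Or.inr ⟨h', hrn, heq⟩
    have haccx : Acceptable M s₀ c x₀ := by
      cases hμs : μ s₀ with
      | none => unfold Acceptable; rw [← hμs]; exact hd₀
      | some y =>
          rw [hμs] at hd₀
          exact prS_trans M s₀ hd₀ (h.2.1 s₀ y hμs)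
    rcases hcase with heq | ⟨x, hx, hμ's₀, hdx⟩
    · -- impossible: s₀ would take the newly permitted contract
      cases hμs : μ s₀ with
      | none => exact (hμ' s₀).2 (heq.trans hμs) c x₀ ⟨hpermx, haccx⟩
      | some y =>
          have hb := ((hμ' s₀).1 y.1 y.2 (by rw [heq, hμs])).2.2 c x₀ hpermx haccx
            (by
              intro hcon
              have hsome : some (c, x₀) = some y := by rw [hcon]
              rw [hμs, ← hsome] at hd₀
              exact prS_irrefl M s₀ _ hd₀)
          rw [hμs] at hd₀
          exact prS_asymm M s₀ hd₀ (by simpa using hb)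
    · -- the new matching is an improving update, contradicting `no_waste`
      have hupd : μ' = Function.update μ s₀ (some (c, x)) := by
        funext s
        rcases eq_or_ne s s₀ with rfl | hs
        · rw [Function.update_self]; exact hμ's₀
        · rw [Function.update_of_ne hs]; exact hoff s hs
      rw [hupd] at hfeas'
      refine no_waste M h s₀ c x hdx hfeas' ?_
      intro s'' hd'' hpr''
      by_contra hxn
      have hxr : x = r := by
        rcases hx with h' | ⟨h', _⟩
        · exact h'
        · exact absurd h' hxn
      subst hxr
      have h1 : theCut M μ c x ≤ rawCut M μ c x := theCut_le_raw M μ c x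
      have h2 : rawCut M μ c x ≤ studentRank M c s'' := rawCut_le M μ hd''
      have h3 : studentRank M c s'' < studentRank M c s₀ := rank_lt_of_pr M hpr''
      omega
  · -- uniqueness
    rintro K' ⟨hopt', hind'⟩
    funext c r
    have h1 : ∀ r₀, K' c r₀ ≤ rawCut M μ c r₀ := by
      intro r₀
      rcases rawCut_mem M μ c r₀ with heq | ⟨s, hs, hdem⟩
      · rw [heq]; exact hopt'.1.1 c r₀
      · rw [← hs]
        by_contra hcon
        push_neg at hcon
        have hperm : Permitted M K' s c r₀ := hcon
        have hacc : Acceptable M s c r₀ := by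
          cases hμs : μ s with
          | none => unfold Acceptable; rw [← hμs]; exact hdem
          | some y =>
              rw [hμs] at hdem
              exact prS_trans M s hdem (h.2.1 s y hμs)
        cases hμs : μ s with
        | none => exact (hind' s).2 hμs c r₀ ⟨hperm, hacc⟩
        | some y =>
            have hb := ((hind' s).1 y.1 y.2 (by rw [hμs])).2.2 c r₀ hperm hacc
              (by
              intro hcon'
              have hsome : some (c, r₀) = some y := by rw [hcon']
              rw [hμs, ← hsome] at hdem
              exact prS_irrefl M s _ hdem)
            rw [hμs] at hdem
            exact prS_asymm M s hdem (by simpa using hb)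
    have hle : K' c r ≤ theCut M μ c r := by
      cases r with
      | none => exact h1 none
      | some r₁ => exact le_min (h1 (some r₁)) (le_trans (hopt'.1.2 c r₁) (h1 none))
    by_contra hne
    have hlt : K' c r < theCut M μ c r := lt_of_le_of_ne hle hne
    have hltcard : K' c r < Fintype.card S := lt_of_lt_of_le hlt (theCut_le_card M μ c r)
    have hnodem : ∀ (s : S) (r₃ : Option R), studentRank M c s = K' c r →
        (r₃ = r ∨ r₃ = none) → ¬ M.prS s (some (c, r₃)) (μ s) := by
      intro s r₃ hrk hr₃ hdem
      have hbound : theCut M μ c r ≤ rawCut M μ c r₃ := by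
        rcases hr₃ with h' | h'
        · rw [h']; exact theCut_le_raw M μ c r
        · rw [h']; exact theCut_le_rawNone M μ c r
      have := rawCut_le M μ hdem
      omega
    have hindbump : IsInduced M (bump K' c r) μ := by
      intro s
      constructor
      · rintro c₂ r₂ hm
        obtain ⟨hperm, hacc, hbest⟩ := (hind' s).1 c₂ r₂ hm
        refine ⟨permitted_bump_mono M hperm, hacc, ?_⟩
        intro c₃ r₃ hperm₃ hacc₃ hne₃
        rcases (permitted_bump_iff M K' c r s c₃ r₃).mp hperm₃ with hp | ⟨hrk₃, hc₃, hd₃⟩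
        · exact hbest c₃ r₃ hp hacc₃ hne₃
        · subst hc₃
          have hr₃ : r₃ = r ∨ r₃ = none := by
            rcases hd₃ with h' | ⟨h', _, _⟩
            · exact Or.inl h'
            · exact Or.inr h'
          rcases prS_tri M s (some (c₂, r₂)) (some (c₃, r₃)) with h' | h' | h'
          · exact h'
          · exact absurd ((Option.some.inj h').symm) hne₃
          · have : M.prS s (some (c₃, r₃)) (μ s) := by rwa [hm]
            exact absurd this (hnodem s r₃ hrk₃ hr₃)
      · intro hm c₃ r₃ ⟨hperm₃, hacc₃⟩
        rcases (permitted_bump_iff M K' c r s c₃ r₃).mp hperm₃ with hp | ⟨hrk₃, hc₃, hd₃⟩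
        · exact (hind' s).2 hm c₃ r₃ ⟨hp, hacc₃⟩
        · subst hc₃
          have hr₃ : r₃ = r ∨ r₃ = none := by
            rcases hd₃ with h' | ⟨h', _, _⟩
            · exact Or.inl h'
            · exact Or.inr h'
          have : M.prS s (some (c₃, r₃)) (μ s) := by rw [hm]; exact hacc₃
          exact absurd this (hnodem s r₃ hrk₃ hr₃)
    exact absurd h.1 (hopt'.2.2 c r hltcard μ hindbump)

end RRC
end
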